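/- Let (E,H,(·|·)) be an extended affine Lie algebra over a field k of characteristic 0, with core E_c. Then for every ideal I of the Lie algebra E, either I ⊆ Z(E_c) (the centre of E_c) or E_c ⊆ I. -/

import Mathlib

/-! Statement 4: ideals of an extended affine Lie algebra. -/

section EALA

variable {k E : Type*} [Field k] [CharZero k] [LieRing E] [LieAlgebra k E]

/-- The weight space of the toral subalgebra `H` for the weight `α ∈ H*`:
`E_α = {e ∈ E : [h,e] = α(h)e for all h ∈ H}`. -/
def wtSpace (H : LieSubalgebra k E) (α : Module.Dual k H) : Submodule k E where
  carrier := {e | ∀ h : H, ⁅(h : E), e⁆ = α h • e}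
  add_mem' := by
    intro a b ha hb h
    simp only [lie_add, ha h, hb h, smul_add]
  zero_mem' := by
    intro h
    simp
  smul_mem' := by
    intro c a ha h
    rw [lie_smul, ha h, smul_comm]

/-- The set of roots `Ψ` of `(E,H)`: those `α ∈ H*` with `E_α ≠ 0` (note `0 ∈ Ψ`). -/
def rootSet (H : LieSubalgebra k E) : Set (Module.Dual k H) :=
  {α | wtSpace H α ≠ ⊥}

variable (B : E →ₗ[k] E →ₗ[k] k)

/-- The representatives `t_α ∈ H` of `α ∈ H*` under the form: `(t_α | h) = α(h)` for `h ∈ H`. -/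
def reps (H : LieSubalgebra k E) (α : Module.Dual k H) : Set H :=
  {t | ∀ h : H, B (t : E) (h : E) = α h}

/-- The anisotropic roots: `Ψ^an = {α ∈ Ψ : (α|α) ≠ 0}`. -/
def anisoRootSet (H : LieSubalgebra k E) : Set (Module.Dual k H) :=
  {α | α ∈ rootSet H ∧ ∃ t ∈ reps B H α, B (t : E) (t : E) ≠ 0}

/-- The isotropic (null) roots: `Ψ⁰ = {α ∈ Ψ : (α|α) = 0}`. -/
def isoRootSet (H : LieSubalgebra k E) : Set (Module.Dual k H) :=
  {α | α ∈ rootSet H ∧ ∃ t ∈ reps B H α, B (t : E) (t : E) = 0}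

/-- The core `E_c` of `(E, H, (·|·))`: the subalgebra of `E` generated by
`⋃_{α ∈ Ψ^an} E_α`. -/
def core (H : LieSubalgebra k E) : LieSubalgebra k E :=
  LieSubalgebra.lieSpan k E (⋃ α ∈ anisoRootSet B H, (wtSpace H α : Set E))

/-- An extended affine Lie algebra structure `(E, H, (·|·))` (paper §2.3):
axioms (EA1)–(EA5), together with the requirements that the bilinear form is
nondegenerate, symmetric and invariant. -/
structure IsEALA (H : LieSubalgebra k E) : Prop where
  /-- the form is symmetric -/
  symm : ∀ x y : E, B x y = B y x
  /-- the form is invariant -/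
  invariant : ∀ x y z : E, B ⁅x, y⁆ z = B x ⁅y, z⁆
  /-- the form is nondegenerate -/
  nondeg : ∀ x : E, (∀ y : E, B x y = 0) → x = 0
  /-- (EA1): `H` is nontrivial … -/
  H_ne_bot : H ≠ ⊥
  /-- … finite-dimensional … -/
  H_fd : FiniteDimensional k H
  /-- … self-centralizing (in particular abelian): `E_0 = H` … -/
  self_centralizing : wtSpace H 0 = H.toSubmodule
  /-- … and toral: `E = ⊕_{α ∈ H*} E_α` -/
  toral : (⨆ α : Module.Dual k H, wtSpace H α) = ⊤
  /-- the restriction of the form to `H × H` is nondegenerate -/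
  H_nondeg : ∀ t : H, (∀ h : H, B (t : E) (h : E) = 0) → t = 0
  /-- (EA2): `ad x` is locally nilpotent for `x ∈ E_α`, `α ∈ Ψ^an` -/
  ea2 : ∀ α ∈ anisoRootSet B H, ∀ x ∈ wtSpace H α, ∀ e : E,
    ∃ N : ℕ, (fun y => ⁅x, y⁆)^[N] e = 0
  /-- (EA3): `Ψ^an` is connected -/
  ea3 : ∀ Ψ₁ Ψ₂ : Set (Module.Dual k H), anisoRootSet B H = Ψ₁ ∪ Ψ₂ →
    Ψ₁.Nonempty → Ψ₂.Nonempty →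
    ∃ α ∈ Ψ₁, ∃ β ∈ Ψ₂, ∃ t ∈ reps B H α, ∃ s ∈ reps B H β, B (t : E) (s : E) ≠ 0
  /-- (EA4): the centralizer of the core is contained in the core -/
  ea4 : ∀ e : E, (∀ x ∈ core B H, ⁅e, x⁆ = 0) → e ∈ core B H
  /-- (EA5): the subgroup of `(H*,+)` generated by `Ψ⁰` is free abelian of finite rank -/
  ea5 : ∃ n : ℕ, Nonempty ((AddSubgroup.closure (isoRootSet B H)) ≃+ (Fin n → ℤ))

end EALA

section EALAProof

variable {k E : Type*} [Field k] [CharZero k] [LieRing E] [LieAlgebra k E]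

/-- Over an infinite field, finitely many nonzero linear functionals admit a common
non-vanishing point. -/
private lemma eala_exists_ne_zero {M : Type*} [AddCommGroup M] [Module k M]
    (Φ : Finset (Module.Dual k M)) :
    (∀ φ ∈ Φ, φ ≠ 0) → ∃ h₀ : M, ∀ φ ∈ Φ, φ h₀ ≠ 0 := by
  classical
  induction Φ using Finset.induction_on with
  | empty => exact fun _ => ⟨0, by simp⟩
  | @insert φ₀ s hφ₀s ih =>
    intro hΦ
    obtain ⟨h, hh⟩ := ih fun φ hφ => hΦ φ (Finset.mem_insert_of_mem hφ)
    have hφ₀ : φ₀ ≠ 0 := hΦ φ₀ (Finset.mem_insert_self _ _)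
    obtain ⟨h', hh'⟩ : ∃ h', φ₀ h' ≠ 0 := by
      by_contra hcon
      push_neg at hcon
      exact hφ₀ (LinearMap.ext hcon)
    obtain ⟨c, hcF⟩ := Infinite.exists_notMem_finset
      ((insert φ₀ s).image fun φ => -(φ h) / (φ h'))
    refine ⟨h + c • h', ?_⟩
    intro φ hφ hzero
    rw [map_add, map_smul, smul_eq_mul] at hzero
    by_cases hph' : φ h' = 0
    · rw [hph', mul_zero, add_zero] at hzero
      rcases Finset.mem_insert.mp hφ with rfl | hφs
      · exact hh' hph'
      · exact hh φ hφs hzero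
    · apply hcF
      rw [Finset.mem_image]
      refine ⟨φ, hφ, ?_⟩
      rw [div_eq_iff hph']
      linear_combination -hzero

variable {B : E →ₗ[k] E →ₗ[k] k} {H : LieSubalgebra k E}

/-- Orthogonality of weight spaces: `B(E_β, E_γ) = 0` unless `β + γ = 0`. -/
private lemma eala_wt_ortho (h : IsEALA B H) {β γ : Module.Dual k H} (hbg : β + γ ≠ 0)
    {x y : E} (hx : x ∈ wtSpace H β) (hy : y ∈ wtSpace H γ) : B x y = 0 := by
  obtain ⟨h₀, hh₀⟩ : ∃ h₀ : H, (β + γ) h₀ ≠ 0 := by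
    by_contra hcon
    push_neg at hcon
    exact hbg (LinearMap.ext hcon)
  have h1 : B ⁅x, (h₀ : E)⁆ y = B x ⁅(h₀ : E), y⁆ := h.invariant x h₀ y
  have h2 : ⁅x, (h₀ : E)⁆ = -(β h₀ • x) := by rw [← lie_skew, hx h₀]
  rw [h2, hy h₀, map_neg, map_smul, map_smul] at h1
  simp only [LinearMap.neg_apply, LinearMap.smul_apply, smul_eq_mul] at h1
  have h3 : (β h₀ + γ h₀) * B x y = 0 := by linear_combination -h1
  rw [LinearMap.add_apply] at hh₀
  exact (mul_eq_zero.mp h3).resolve_left hh₀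

/-- Any nonzero weight vector pairs nontrivially with the opposite weight space. -/
private lemma eala_pairing (h : IsEALA B H) {β : Module.Dual k H} {x : E}
    (hx : x ∈ wtSpace H β) (hx0 : x ≠ 0) : ∃ y ∈ wtSpace H (-β), B x y ≠ 0 := by
  by_contra hcon
  push_neg at hcon
  apply hx0
  apply h.nondeg
  intro y
  have hy : y ∈ ⨆ α : Module.Dual k H, wtSpace H α := h.toral ▸ Submodule.mem_top
  refine Submodule.iSup_induction (motive := fun w => B x w = 0) _ hy
    (fun γ w hw => ?_) (by simp)
    (fun a b ha hb => by show B x (a + b) = 0; rw [map_add, ha, hb, add_zero])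
  by_cases hγ : γ = -β
  · exact hcon w (hγ ▸ hw)
  · refine eala_wt_ortho h (fun hs => hγ ?_) hx hw
    rw [eq_neg_iff_add_eq_zero, add_comm]
    exact hs


/-- The `H`-weight components of an element of an ideal stay in the ideal. -/
private lemma eala_components (h : IsEALA B H) (I : LieIdeal k E) {z : E} (hz : z ∈ I) :
    ∃ f : Module.Dual k H →₀ E, (∀ γ, f γ ∈ wtSpace H γ) ∧ (∀ γ, f γ ∈ I) ∧
      (f.sum fun _ v => v) = z := by
  classical
  have hzT : z ∈ ⨆ α : Module.Dual k H, wtSpace H α := h.toral ▸ Submodule.mem_top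
  obtain ⟨f, hf, hsum⟩ := (Submodule.mem_iSup_iff_exists_finsupp _ _).mp hzT
  obtain ⟨h₀, hh₀⟩ := eala_exists_ne_zero
      (((f.support ×ˢ f.support).filter fun p => p.1 ≠ p.2).image fun p => p.1 - p.2) (by
    intro φ hφ
    simp only [Finset.mem_image, Finset.mem_filter] at hφ
    obtain ⟨p, ⟨-, hne⟩, rfl⟩ := hφ
    exact sub_ne_zero.mpr hne)
  have hinj : Set.InjOn (fun γ : Module.Dual k H => γ h₀) f.support := by
    intro a ha b hb hab
    by_contra hne
    have hmem : a - b ∈ ((f.support ×ˢ f.support).filter fun p => p.1 ≠ p.2).image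
        (fun p => p.1 - p.2) := by
      refine Finset.mem_image.mpr ⟨(a, b), ?_, rfl⟩
      refine Finset.mem_filter.mpr ⟨Finset.mem_product.mpr ⟨ha, hb⟩, hne⟩
    have := hh₀ _ hmem
    simp only [LinearMap.sub_apply] at this
    exact this (sub_eq_zero.mpr hab)
  have hpow : ∀ n : ℕ, (∑ γ ∈ f.support, ((γ h₀) ^ n) • f γ) ∈ I := by
    intro n
    induction n with
    | zero =>
      have h0 : (∑ γ ∈ f.support, f γ) ∈ I := by
        rw [show (∑ γ ∈ f.support, f γ) = z from hsum]
        exact hz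
      simpa using h0
    | succ n ih =>
      have hstep : (∑ γ ∈ f.support, ((γ h₀) ^ (n + 1)) • f γ)
          = ⁅(h₀ : E), ∑ γ ∈ f.support, ((γ h₀) ^ n) • f γ⁆ := by
        rw [← LieAlgebra.ad_apply (R := k), map_sum]
        refine Finset.sum_congr rfl fun γ _ => ?_
        rw [LieAlgebra.ad_apply, lie_smul, hf γ h₀, smul_smul, pow_succ, mul_comm]
      rw [hstep]
      exact I.lie_mem ih
  have hpoly : ∀ P : Polynomial k, (∑ γ ∈ f.support, (P.eval (γ h₀)) • f γ) ∈ I := by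
    intro P
    induction P using Polynomial.induction_on' with
    | add p q hp hq =>
      have : (∑ γ ∈ f.support, ((p + q).eval (γ h₀)) • f γ)
          = (∑ γ ∈ f.support, (p.eval (γ h₀)) • f γ)
            + (∑ γ ∈ f.support, (q.eval (γ h₀)) • f γ) := by
        rw [← Finset.sum_add_distrib]
        refine Finset.sum_congr rfl fun γ _ => ?_
        rw [Polynomial.eval_add, add_smul]
      rw [this]
      exact I.add_mem hp hq
    | monomial n a =>
      have : (∑ γ ∈ f.support, (((Polynomial.monomial n) a).eval (γ h₀)) • f γ)
          = a • ∑ γ ∈ f.support, ((γ h₀) ^ n) • f γ := by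
        rw [Finset.smul_sum]
        refine Finset.sum_congr rfl fun γ _ => ?_
        rw [Polynomial.eval_monomial, mul_smul]
      rw [this]
      exact I.smul_mem a (hpow n)
  refine ⟨f, hf, ?_, hsum⟩
  intro γ₀
  by_cases hγ₀ : γ₀ ∈ f.support
  · have hkey := hpoly (Lagrange.interpolate f.support (fun γ => γ h₀)
      (fun γ => if γ = γ₀ then 1 else 0))
    have heval : (∑ γ ∈ f.support,
        ((Lagrange.interpolate f.support (fun γ => γ h₀)
          (fun γ => if γ = γ₀ then 1 else 0)).eval (γ h₀)) • f γ) = f γ₀ := by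
      rw [Finset.sum_congr rfl fun γ hγ => by
        rw [Lagrange.eval_interpolate_at_node _ hinj hγ]]
      rw [Finset.sum_congr rfl fun γ (hγ : γ ∈ f.support) => by
        rw [ite_smul, one_smul, zero_smul]]
      rw [Finset.sum_ite_eq' f.support γ₀ f, if_pos hγ₀]
    rwa [heval] at hkey
  · rw [Finsupp.notMem_support_iff.mp hγ₀]
    exact I.zero_mem

/-- Uniqueness of the representative `t_α`. -/
private lemma eala_reps_unique (h : IsEALA B H) {α : Module.Dual k H} {t t' : H}
    (ht : t ∈ reps B H α) (ht' : t' ∈ reps B H α) : t = t' := by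
  have hsub : t - t' = 0 := by
    apply h.H_nondeg
    intro h'
    have h1 := ht h'
    have h2 := ht' h'
    have hcoe : ((t - t' : H) : E) = (t : E) - (t' : E) := rfl
    rw [hcoe, map_sub, LinearMap.sub_apply, h1, h2, sub_self]
  rw [← sub_eq_zero]
  exact hsub

/-- If an element of an ideal pairs nontrivially with `E_α` for `α` anisotropic, then the
ideal contains the representative `t_α`. -/
private lemma eala_key (h : IsEALA B H) (I : LieIdeal k E) {α : Module.Dual k H}
    (hα : α ∈ anisoRootSet B H) {x z : E} (hx : x ∈ wtSpace H α) (hz : z ∈ I)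
    (hB : B x z ≠ 0) :
    ∃ t : H, t ∈ reps B H α ∧ (t : E) ∈ I ∧ B (t : E) (t : E) ≠ 0 := by
  classical
  obtain ⟨f, hfw, hfI, hfs⟩ := eala_components h I hz
  have hBz : B x z = B x (f (-α)) := by
    rw [← hfs, Finsupp.sum, map_sum]
    refine Finset.sum_eq_single (-α) (fun γ hγ hne => ?_) (fun hna => by
      rw [Finsupp.notMem_support_iff.mp hna, map_zero])
    refine eala_wt_ortho h (fun hs => hne ?_) hx (hfw γ)
    rw [eq_neg_iff_add_eq_zero, add_comm]
    exact hs
  set u := f (-α) with hu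
  have hxu : B x u ≠ 0 := hBz ▸ hB
  have hwH : ⁅x, u⁆ ∈ wtSpace H 0 := by
    intro h'
    have hleib : ⁅(h' : E), ⁅x, u⁆⁆ = ⁅⁅(h' : E), x⁆, u⁆ + ⁅x, ⁅(h' : E), u⁆⁆ :=
      leibniz_lie _ _ _
    rw [hx h', hfw (-α) h'] at hleib
    simp only [LinearMap.neg_apply, smul_lie, lie_smul, neg_smul] at hleib
    rw [hleib]
    simp [hu]
  have hwH' : ⁅x, u⁆ ∈ H := by
    have := h.self_centralizing ▸ hwH
    exact this
  have hform : ∀ h' : H, B ⁅x, u⁆ (h' : E) = α h' * B x u := by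
    intro h'
    rw [h.invariant x u h']
    have huh : ⁅u, (h' : E)⁆ = α h' • u := by
      rw [← lie_skew, hfw (-α) h']
      simp [hu]
    rw [huh, map_smul, smul_eq_mul]
  refine ⟨(B x u)⁻¹ • ⟨⁅x, u⁆, hwH'⟩, ?_, ?_, ?_⟩
  · intro h'
    have hcoe : (((B x u)⁻¹ • (⟨⁅x, u⁆, hwH'⟩ : H) : H) : E) = (B x u)⁻¹ • ⁅x, u⁆ := rfl
    rw [hcoe, map_smul, LinearMap.smul_apply, smul_eq_mul, hform h']
    field_simp
  · have hcoe : (((B x u)⁻¹ • (⟨⁅x, u⁆, hwH'⟩ : H) : H) : E) = (B x u)⁻¹ • ⁅x, u⁆ := rfl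
    rw [hcoe]
    exact I.smul_mem _ (I.lie_mem (hfI (-α)))
  · obtain ⟨-, t'', ht''reps, ht''ne⟩ := hα
    have hequ : ((B x u)⁻¹ • (⟨⁅x, u⁆, hwH'⟩ : H)) = t'' := by
      apply eala_reps_unique h ?_ ht''reps
      intro h'
      have hcoe : (((B x u)⁻¹ • (⟨⁅x, u⁆, hwH'⟩ : H) : H) : E) = (B x u)⁻¹ • ⁅x, u⁆ := rfl
      rw [hcoe, map_smul, LinearMap.smul_apply, smul_eq_mul, hform h']
      field_simp
    rw [hequ]
    exact ht''ne

/-- If `t ∈ H ∩ I` and `γ(t) ≠ 0` then `E_γ ⊆ I`. -/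
private lemma eala_spread (I : LieIdeal k E) {t : H} (htI : (t : E) ∈ I)
    {γ : Module.Dual k H} (hγ : γ t ≠ 0) {y : E} (hy : y ∈ wtSpace H γ) : y ∈ I := by
  have hty : ⁅(t : E), y⁆ = γ t • y := hy t
  have hmem : ⁅(t : E), y⁆ ∈ I := by
    rw [← lie_skew]
    exact I.neg_mem (I.lie_mem htI)
  rw [hty] at hmem
  have := I.smul_mem (γ t)⁻¹ hmem
  rwa [smul_smul, inv_mul_cancel₀ hγ, one_smul] at this

end EALAProof

/-- Proposition 3.1 of the paper: in an EALA `(E,H,(·|·))`, every ideal `I`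
of `E` either is contained in the centre of the core `E_c`, or contains `E_c`. -/
theorem eala_ideal_dichotomy
    {k E : Type*} [Field k] [CharZero k] [LieRing E] [LieAlgebra k E]
    (B : E →ₗ[k] E →ₗ[k] k) (H : LieSubalgebra k E)
    (h : IsEALA B H)
    (I : LieIdeal k E) :
    (∀ z ∈ I, z ∈ core B H ∧ ∀ x ∈ core B H, ⁅z, x⁆ = 0) ∨
    (∀ x ∈ core B H, x ∈ I) := by
  classical
  by_cases hc : ∀ z ∈ I, ∀ x ∈ core B H, ⁅z, x⁆ = 0
  · exact Or.inl fun z hz => ⟨h.ea4 z (hc z hz), hc z hz⟩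
  right
  -- `T` : anisotropic roots whose weight space is orthogonal to `I`
  set T : Set (Module.Dual k H) :=
    {α | α ∈ anisoRootSet B H ∧ ∀ x ∈ wtSpace H α, ∀ z ∈ I, B x z = 0} with hTdef
  -- for roots not in `T`, the representative `t_α` belongs to `I`
  have hSmem : ∀ α ∈ anisoRootSet B H, α ∉ T →
      ∃ t : H, t ∈ reps B H α ∧ (t : E) ∈ I ∧ B (t : E) (t : E) ≠ 0 := by
    intro α hα hαT
    have hnot : ¬ ∀ x ∈ wtSpace H α, ∀ z ∈ I, B x z = 0 := fun hh => hαT ⟨hα, hh⟩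
    push_neg at hnot
    obtain ⟨x, hx, z, hz, hB⟩ := hnot
    exact eala_key h I hα hx hz hB
  by_cases hTall : anisoRootSet B H ⊆ T
  · -- every anisotropic weight space is orthogonal to `I`: then `I` centralizes the core,
    -- contradicting `hc`
    exfalso
    apply hc
    intro z hz x hx
    let C : LieSubalgebra k E :=
      { carrier := {w | ∀ z ∈ I, ⁅w, z⁆ = 0}
        add_mem' := fun {a b} ha hb z hz => by rw [add_lie, ha z hz, hb z hz, add_zero]
        zero_mem' := fun z _ => zero_lie z
        smul_mem' := fun c a ha z hz => by rw [smul_lie, ha z hz, smul_zero]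
        lie_mem' := fun {a b} ha hb z hz => by
          rw [lie_lie, hb z hz, ha z hz, lie_zero, lie_zero, sub_zero] }
    have hsub : (⋃ α ∈ anisoRootSet B H, (wtSpace H α : Set E)) ⊆ (C : Set E) := by
      intro w hw
      obtain ⟨α, hα, hwα⟩ := Set.mem_iUnion₂.mp hw
      intro z hz
      apply h.nondeg
      intro y
      rw [h.invariant w z y]
      have hzy : ⁅z, y⁆ ∈ I := by
        rw [← lie_skew]
        exact I.neg_mem (I.lie_mem hz)
      exact (hTall hα).2 w hwα _ hzy
    have hcore : core B H ≤ C := LieSubalgebra.lieSpan_le.mpr hsub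
    have hxz : ⁅x, z⁆ = 0 := hcore hx z hz
    rw [← lie_skew, hxz, neg_zero]
  · obtain ⟨α₀, hα₀, hα₀T⟩ := Set.not_subset.mp hTall
    by_cases hTe : T.Nonempty
    · -- both `S = Ψ^an \ T` and `T` are nonempty: contradiction with connectedness (EA3)
      exfalso
      have hTsub : T ⊆ anisoRootSet B H := fun β hβ => hβ.1
      obtain ⟨a, ha, b, hb, t, htreps, s, hsreps, hBts⟩ :=
        h.ea3 (anisoRootSet B H \ T) T (Set.diff_union_of_subset hTsub).symm
          ⟨α₀, hα₀, hα₀T⟩ hTe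
      obtain ⟨ta, htaR, htaI, htaB⟩ := hSmem a ha.1 ha.2
      have hta : t = ta := eala_reps_unique h htreps htaR
      have hbta : b ta ≠ 0 := by
        have h1 : B (s : E) (ta : E) = b ta := hsreps ta
        rw [← h1, h.symm (s : E) (ta : E), ← hta]
        exact hBts
      have hbroot : wtSpace H b ≠ ⊥ := hb.1.1
      obtain ⟨x₀, hx₀w, hx₀0⟩ := (Submodule.ne_bot_iff _).mp hbroot
      obtain ⟨y₀, hy₀w, hy₀B⟩ := eala_pairing h hx₀w hx₀0
      have hnb : (-b) ta ≠ 0 := by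
        simp only [LinearMap.neg_apply]
        exact neg_ne_zero.mpr hbta
      have hy₀I : y₀ ∈ I := eala_spread I htaI hnb hy₀w
      exact hy₀B (hb.2 x₀ hx₀w y₀ hy₀I)
    · -- `T` is empty: every anisotropic weight space is contained in `I`
      intro x hx
      have hsub : (⋃ α ∈ anisoRootSet B H, (wtSpace H α : Set E))
          ⊆ ((LieIdeal.toLieSubalgebra k E I : LieSubalgebra k E) : Set E) := by
        intro w hw
        obtain ⟨α, hα, hwα⟩ := Set.mem_iUnion₂.mp hw
        obtain ⟨ta, htaR, htaI, htaB⟩ := hSmem α hα (fun hmem => hTe ⟨α, hmem⟩)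
        have hαta : α ta ≠ 0 := by
          rw [← htaR ta]
          exact htaB
        exact eala_spread I htaI hαta hwα
      have hcore : core B H ≤ LieIdeal.toLieSubalgebra k E I := LieSubalgebra.lieSpan_le.mpr hsub
      exact hcore hx
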